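/- Let O be a complete DVR with uniformizer π and algebraically closed residue field k of characteristic p, let σ be a ring automorphism of O fixing π and inducing a positive power of Frobenius on k, and let O₀ = O^⟨σ⟩. Let Λ be an O-algebra that is free of finite rank as an O-module. Denote by Λ^(σ) the O-algebra with the same ring structure as Λ but scalar action λ·a = σ⁻¹(λ)a. If Λ ≅ Λ^(σ) as O-algebras, then there exists an O₀-subalgebra Λ₀ ⊆ Λ which is free of finite rank over O₀ such that Λ ≅ O ⊗_{O₀} Λ₀ as O-algebras. -/

import Mathlib

open Polynomial


section Lang

variable {p : ℕ} [Fact p.Prime]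
variable {k : Type*} [Field k] [IsAlgClosed k] [CharP k p]

omit [IsAlgClosed k] in
lemma aux_coeff_one_pow_char (g : k[X]) {m : ℕ} (hm : 0 < m) : (g ^ p ^ m).coeff 1 = 0 := by
  obtain ⟨m, rfl⟩ := Nat.exists_eq_succ_of_ne_zero hm.ne'
  have h : (g ^ p ^ m) ^ p = g ^ p ^ (m + 1) := by rw [← pow_mul, pow_succ]
  have hp : ¬ (p ∣ 1) := fun d =>
    (Nat.Prime.one_lt (Fact.out (p := p.Prime))).ne' (Nat.eq_one_of_dvd_one d)
  show (g ^ p ^ (m + 1)).coeff 1 = 0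
  rw [← h, ← Polynomial.map_frobenius_expand p (g ^ p ^ m), Polynomial.coeff_map,
    Polynomial.coeff_expand (Fact.out (p := p.Prime)).pos, if_neg hp, map_zero]

/-- the auxiliary polynomials in the proof of the fixed point lemma -/
noncomputable def cpoly (A : ℕ → k) (q : ℕ) : ℕ → k[X] := fun i =>
  Nat.rec (C (A 0) * X ^ q) (fun i ci => ci ^ q + C (A (i + 1)) * X ^ q) i

lemma cpoly_zero (A : ℕ → k) (q : ℕ) : cpoly A q 0 = C (A 0) * X ^ q := rfl

lemma cpoly_succ (A : ℕ → k) (q : ℕ) (i : ℕ) :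
    cpoly A q (i + 1) = (cpoly A q i) ^ q + C (A (i + 1)) * X ^ q := rfl

variable {V : Type*} [AddCommGroup V] [Module k V] [FiniteDimensional k V]

lemma exists_fixed_vector {q nn : ℕ} (hnn : 0 < nn) (hq : q = p ^ nn)
    (φ : V → V) (hadd : ∀ x y, φ (x + y) = φ x + φ y)
    (hsmul : ∀ (c : k) (x : V), φ (c • x) = c ^ q • φ x)
    (hinj : Function.Injective φ)
    {v : V} (hv : v ≠ 0) : ∃ x : V, x ≠ 0 ∧ φ x = x := by
  classical
  have hq2 : 2 ≤ q := by
    have h2 := (Fact.out (p := p.Prime)).two_le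
    calc 2 ≤ p := h2
    _ = p ^ 1 := (pow_one p).symm
    _ ≤ p ^ nn := Nat.pow_le_pow_right (by omega) hnn
    _ = q := hq.symm
  set Φ' : V →+ V := AddMonoidHom.mk' φ hadd with hΦ'
  have hφ : ∀ x, Φ' x = φ x := fun _ => rfl
  have h00 : φ (0 : V) = 0 := map_zero Φ'
  set F : ℕ → V := fun i => φ^[i] v with hFdef
  have hF : ∀ i, F (i + 1) = φ (F i) := fun i => Function.iterate_succ_apply' φ i v
  have hF0 : F 0 = v := rfl
  -- the key computation of φ applied to combinations
  have key : ∀ (N : ℕ) (γ : ℕ → k),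
      φ (∑ i ∈ Finset.range N, γ i • F i) = ∑ i ∈ Finset.range N, (γ i ^ q) • F (i + 1) := by
    intro N γ
    rw [← hφ, map_sum]
    exact Finset.sum_congr rfl fun i _ => by rw [hφ, hsmul, ← hF]
  -- the snoc decomposition
  have hsnoc : ∀ N : ℕ, (fun i : Fin (N + 1) => F ↑i) = Fin.snoc (fun i : Fin N => F ↑i) (F N) := by
    intro N; funext i
    refine Fin.lastCases ?_ ?_ i
    · simp
    · intro j; simp
  have hdep : ∃ N, ¬ LinearIndependent k (fun i : Fin (N + 1) => F ↑i) := by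
    refine ⟨Module.finrank k V, fun h => ?_⟩
    have := h.fintype_card_le_finrank
    simp only [Fintype.card_fin] at this
    omega
  obtain ⟨m, hm, hmin⟩ : ∃ m, (¬ LinearIndependent k (fun i : Fin (m + 1) => F ↑i)) ∧
      ∀ j, j < m → LinearIndependent k (fun i : Fin (j + 1) => F ↑i) :=
    ⟨Nat.find hdep, Nat.find_spec hdep, fun j hj => of_not_not (Nat.find_min hdep hj)⟩
  have hm0 : m ≠ 0 := by
    intro h
    subst h
    apply hm
    apply (linearIndependent_unique_iff (v := fun i : Fin 1 => F ↑i)).mpr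
    simpa [hF0] using hv
  obtain ⟨m', rfl⟩ := Nat.exists_eq_succ_of_ne_zero hm0
  have hind : LinearIndependent k (fun i : Fin (m' + 1) => F ↑i) := hmin m' (by omega)
  -- F (m'+1) is in the span of the previous ones
  have hmem : F (m' + 1) ∈ Submodule.span k (Set.range (fun i : Fin (m' + 1) => F ↑i)) := by
    rw [hsnoc (m' + 1), linearIndependent_fin_snoc] at hm
    · exact of_not_not fun hc => hm ⟨hind, hc⟩
  obtain ⟨a, ha'⟩ := Submodule.mem_span_range_iff_exists_fun k |>.mp hmem
  set A : ℕ → k := fun i => if h : i < m' + 1 then a ⟨i, h⟩ else 0 with hA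
  have ha : ∑ i ∈ Finset.range (m' + 1), A i • F i = F (m' + 1) := by
    rw [← ha', Finset.sum_range]
    exact Finset.sum_congr rfl fun i _ => by simp [hA]; intro h; exact absurd i.isLt (by omega)
  -- the constant term coefficient is nonzero
  have ha₀ : A 0 ≠ 0 := by
    intro h0
    have hroot : ∀ i : ℕ, ∃ b : k, b ^ q = A (i + 1) :=
      fun i => IsAlgClosed.exists_pow_nat_eq _ (by omega)
    choose s hs using hroot
    have hsum : F (m' + 1) = ∑ i ∈ Finset.range m', A (i + 1) • F (i + 1) := by
      rw [← ha, Finset.sum_range_succ' (fun i => A i • F i) m', h0, zero_smul, add_zero]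
    have hL : φ (F m' - ∑ i ∈ Finset.range m', s i • F i) = φ 0 := by
      calc φ (F m' - ∑ i ∈ Finset.range m', s i • F i)
          = φ (F m') - φ (∑ i ∈ Finset.range m', s i • F i) := map_sub Φ' _ _
      _ = 0 := by
          rw [← hF, hsum, key, sub_eq_zero]
          exact Finset.sum_congr rfl fun i _ => by rw [hs]
      _ = φ 0 := h00.symm
    have hEq : F m' = ∑ i ∈ Finset.range m', s i • F i := by
      have := hinj hL
      rwa [sub_eq_zero] at this
    have hno : F m' ∉ Submodule.span k (Set.range (fun i : Fin m' => F ↑i)) := by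
      have h2 := hsnoc m' ▸ hind
      exact (linearIndependent_fin_snoc.mp h2).2
    apply hno
    rw [hEq, Finset.sum_range]
    exact Submodule.sum_mem _ fun i _ =>
      Submodule.smul_mem _ _ (Submodule.subset_span ⟨i, rfl⟩)
  -- facts about the auxiliary polynomials
  have hq0 : q ≠ 0 := by omega
  have hcne : ∀ i, (cpoly A q i).natDegree = q ^ (i + 1) ∧ cpoly A q i ≠ 0 := by
    intro i
    induction i with
    | zero =>
      constructor
      · rw [cpoly_zero, natDegree_C_mul_X_pow q (A 0) ha₀, pow_one]
      · rw [cpoly_zero]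
        exact mul_ne_zero (Polynomial.C_ne_zero.mpr ha₀) (pow_ne_zero _ Polynomial.X_ne_zero)
    | succ i ih =>
      have h1 : (cpoly A q i ^ q).natDegree = q ^ (i + 2) := by
        rw [natDegree_pow, ih.1, ← pow_succ']
      have h2 : (C (A (i + 1)) * X ^ q).natDegree < q ^ (i + 2) := by
        calc (C (A (i + 1)) * X ^ q).natDegree
            ≤ (C (A (i + 1))).natDegree + (X ^ q : k[X]).natDegree := natDegree_mul_le
        _ = q := by rw [natDegree_C, natDegree_X_pow, zero_add]
        _ = q ^ 1 := (pow_one q).symm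
        _ < q ^ (i + 2) := Nat.pow_lt_pow_right (by omega) (by omega)
      constructor
      · rw [cpoly_succ, natDegree_add_eq_left_of_natDegree_lt (h1 ▸ h2), h1]
      · intro hzero
        rw [cpoly_succ] at hzero
        have := eq_neg_of_add_eq_zero_left hzero
        have hdeg := congrArg natDegree this
        rw [h1, natDegree_neg] at hdeg
        omega
  have hcoeff1 : ∀ i, (cpoly A q i).coeff 1 = 0 := by
    intro i
    induction i with
    | zero =>
      rw [cpoly_zero, coeff_C_mul, coeff_X_pow, if_neg (by omega), mul_zero]
    | succ i ih =>
      rw [cpoly_succ, coeff_add, coeff_C_mul, coeff_X_pow, if_neg (by omega), mul_zero, add_zero]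
      rw [hq]
      exact aux_coeff_one_pow_char _ hnn
  have heval0 : ∀ i, (cpoly A q i).eval 0 = 0 := by
    intro i
    induction i with
    | zero => simp [cpoly_zero, zero_pow hq0]
    | succ i ih => simp [cpoly_succ, zero_pow hq0, ih]
  -- the polynomial Q and its nonzero root
  set Q : k[X] := cpoly A q m' - X with hQ
  have hQdeg : Q.natDegree = q ^ (m' + 1) := by
    rw [hQ]
    rw [natDegree_sub_eq_left_of_natDegree_lt, (hcne m').1]
    rw [(hcne m').1, natDegree_X]
    calc 1 < q := by omega
    _ = q ^ 1 := (pow_one q).symm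
    _ ≤ q ^ (m' + 1) := Nat.pow_le_pow_right (by omega) (by omega)
  have hQc1 : Q.coeff 1 = -1 := by
    rw [hQ, coeff_sub, hcoeff1 m', coeff_X_one, zero_sub]
  have hQ0 : Q.coeff 0 = 0 := by
    rw [coeff_zero_eq_eval_zero, hQ, eval_sub, heval0 m', eval_X, sub_zero]
  obtain ⟨R, hR⟩ : (X : k[X]) ∣ Q := X_dvd_iff.mpr hQ0
  have hRc0 : R.coeff 0 = -1 := by
    rw [← coeff_X_mul R 0, ← hR, hQc1]
  have hRne : R ≠ 0 := by
    intro h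
    rw [h, mul_zero] at hR
    rw [hR] at hQc1
    simp at hQc1
  have hQne : 2 ≤ q ^ (m' + 1) := by
    calc 2 ≤ q := hq2
    _ = q ^ 1 := (pow_one q).symm
    _ ≤ q ^ (m' + 1) := Nat.pow_le_pow_right (by omega) (by omega)
  have hRdeg : R.degree ≠ 0 := by
    have hmul : Q.natDegree = 1 + R.natDegree := by
      rw [hR, natDegree_mul Polynomial.X_ne_zero hRne, natDegree_X]
    have : 0 < R.natDegree := by omega
    exact (natDegree_pos_iff_degree_pos.mp this).ne'
  obtain ⟨t₀, hroot⟩ := IsAlgClosed.exists_root R hRdeg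
  have ht₀ : t₀ ≠ 0 := by
    intro h
    rw [h] at hroot
    rw [IsRoot.def, ← coeff_zero_eq_eval_zero, hRc0] at hroot
    simp at hroot
  have hQt : (cpoly A q m').eval t₀ = t₀ := by
    have hz : Q.eval t₀ = 0 := by
      rw [hR, eval_mul, show eval t₀ R = 0 from hroot, mul_zero]
    rw [hQ, eval_sub, eval_X, sub_eq_zero] at hz
    exact hz
  -- the fixed vector
  set γ : ℕ → k := fun i => (cpoly A q i).eval t₀ with hγ
  have hγ0 : γ 0 = A 0 * t₀ ^ q := by simp [hγ, cpoly_zero]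
  have hγs : ∀ i, γ (i + 1) = γ i ^ q + A (i + 1) * t₀ ^ q := by
    intro i; simp [hγ, cpoly_succ]
  have hγm' : γ m' = t₀ := hQt
  refine ⟨∑ i ∈ Finset.range (m' + 1), γ i • F i, ?_, ?_⟩
  · intro hzero
    have h2 : ∑ i : Fin (m' + 1), γ ↑i • F ↑i = 0 := by
      rw [Fin.sum_univ_eq_sum_range (fun i => γ i • F i)]
      exact hzero
    have h3 := Fintype.linearIndependent_iff.mp hind (fun i => γ ↑i) h2 ⟨m', by omega⟩
    simp only at h3
    rw [hγm'] at h3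
    exact ht₀ h3
  · rw [key]
    rw [Finset.sum_range_succ (fun i => γ i ^ q • F (i + 1)) m']
    rw [hγm', ← ha, Finset.smul_sum]
    simp only [smul_smul]
    rw [Finset.sum_range_succ' (fun i => (t₀ ^ q * A i) • F i) m']
    rw [← add_assoc, ← Finset.sum_add_distrib]
    have hterm : ∀ i, γ i ^ q • F (i + 1) + (t₀ ^ q * A (i + 1)) • F (i + 1) = γ (i + 1) • F (i + 1) := by
      intro i
      rw [← add_smul, hγs i, mul_comm (A (i + 1)) (t₀ ^ q)]
    calc (∑ i ∈ Finset.range m', (γ i ^ q • F (i + 1) + (t₀ ^ q * A (i + 1)) • F (i + 1)))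
          + (t₀ ^ q * A 0) • F 0
        = (∑ i ∈ Finset.range m', γ (i + 1) • F (i + 1)) + γ 0 • F 0 := by
          rw [hγ0, mul_comm (A 0) (t₀ ^ q)]
          exact congrArg (· + (t₀ ^ q * A 0) • F 0) (Finset.sum_congr rfl fun i _ => hterm i)
    _ = ∑ i ∈ Finset.range (m' + 1), γ i • F i :=
          (Finset.sum_range_succ' (fun i => γ i • F i) m').symm




omit [IsAlgClosed k] [CharP k p] [FiniteDimensional k V] in
lemma artin_schreier_surj {q : ℕ} (hq2 : 2 ≤ q) [IsAlgClosed k] : ∀ z : k, ∃ c : k, c ^ q - c = z := by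
  intro z
  have hdeg : ((X : k[X]) ^ q - (X + C z)).natDegree = q := by
    rw [natDegree_sub_eq_left_of_natDegree_lt (by rw [natDegree_X_pow, natDegree_X_add_C]; omega),
      natDegree_X_pow]
  have h0 : ((X : k[X]) ^ q - (X + C z)).degree ≠ 0 := by
    have : 0 < ((X : k[X]) ^ q - (X + C z)).natDegree := by omega
    exact (natDegree_pos_iff_degree_pos.mp this).ne'
  obtain ⟨c, hc⟩ := IsAlgClosed.exists_root _ h0
  refine ⟨c, ?_⟩
  have := hc
  rw [IsRoot.def, eval_sub, eval_pow, eval_X, eval_add, eval_X, eval_C, sub_eq_zero] at this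
  rw [this]
  ring

lemma exists_fixed_basis {q nn : ℕ} (hnn : 0 < nn) (hq : q = p ^ nn)
    (φ : V → V) (hadd : ∀ x y, φ (x + y) = φ x + φ y)
    (hsmul : ∀ (c : k) (x : V), φ (c • x) = c ^ q • φ x)
    (hinj : Function.Injective φ) :
    ∃ (N : ℕ) (b : Module.Basis (Fin N) k V), ∀ i, φ (b i) = b i := by
  classical
  have hq2 : 2 ≤ q := by
    have h2 := (Fact.out (p := p.Prime)).two_le
    have := Nat.pow_le_pow_right (show 1 ≤ p by omega) hnn
    simp only [pow_one] at this
    calc 2 ≤ p := h2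
    _ ≤ p ^ nn := Nat.le_self_pow hnn.ne' p
    _ = q := hq.symm
  set Φ' : V →+ V := AddMonoidHom.mk' φ hadd with hΦ'
  have hφ : ∀ x, Φ' x = φ x := fun _ => rfl
  have h00 : φ (0 : V) = 0 := map_zero Φ'
  set S : Set V := {x : V | φ x = x} with hS
  set U : Submodule k V := Submodule.span k S with hU
  -- φ maps U into U
  have hUstab : ∀ u ∈ U, φ u ∈ U := by
    intro u hu
    induction hu using Submodule.span_induction with
    | mem x hx => rw [hx]; exact Submodule.subset_span hx
    | zero => rw [h00]; exact zero_mem _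
    | add x y _ _ hx hy => rw [hadd]; exact add_mem hx hy
    | smul c x _ hx => rw [hsmul]; exact Submodule.smul_mem _ _ hx
  -- φ restricted to U is surjective onto U
  have hUsurj : ∀ u ∈ U, ∃ w ∈ U, φ w = u := by
    intro u hu
    induction hu using Submodule.span_induction with
    | mem x hx => exact ⟨x, Submodule.subset_span hx, hx⟩
    | zero => exact ⟨0, zero_mem _, h00⟩
    | add x y _ _ hx hy =>
      obtain ⟨wx, hwx, ex⟩ := hx
      obtain ⟨wy, hwy, ey⟩ := hy
      exact ⟨wx + wy, add_mem hwx hwy, by rw [hadd, ex, ey]⟩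
    | smul c x _ hx =>
      obtain ⟨w, hw, ew⟩ := hx
      obtain ⟨b, hb⟩ := IsAlgClosed.exists_pow_nat_eq c (show 0 < q by omega)
      exact ⟨b • w, Submodule.smul_mem _ _ hw, by rw [hsmul, hb, ew]⟩
  -- (φ - 1) is surjective onto U
  have hsurj1 : ∀ u ∈ U, ∃ w ∈ U, φ w - w = u := by
    intro u hu
    obtain ⟨nf, f, g, hfg⟩ := Submodule.mem_span_set'.mp hu
    choose c hc using fun i => artin_schreier_surj hq2 (f i)
    refine ⟨∑ i, c i • (g i : V), ?_, ?_⟩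
    · exact Submodule.sum_mem _ fun i _ =>
        Submodule.smul_mem _ _ (Submodule.subset_span (g i).2)
    · have h1 : φ (∑ i, c i • (g i : V)) = ∑ i, (c i ^ q) • (g i : V) := by
        rw [← hφ, map_sum]
        refine Finset.sum_congr rfl fun i _ => ?_
        rw [hφ, hsmul, (g i).2]
      rw [h1, ← Finset.sum_sub_distrib]
      rw [← hfg]
      exact Finset.sum_congr rfl fun i _ => by rw [← sub_smul, hc]
  -- U is everything
  have hUtop : U = ⊤ := by
    by_contra hne
    have hlt : U < ⊤ := lt_top_iff_ne_top.mpr hne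
    have : Nontrivial (V ⧸ U) := Submodule.Quotient.nontrivial_iff.mpr hlt.ne
    have hwd : ∀ a b : V, (Submodule.quotientRel U) a b →
        (Submodule.Quotient.mk (φ a) : V ⧸ U) = Submodule.Quotient.mk (φ b) := by
      intro a b hab
      have hab' : a - b ∈ U := by
        rwa [Submodule.quotientRel_def] at hab
      rw [Submodule.Quotient.eq]
      have : φ a - φ b = φ (a - b) := (map_sub Φ' a b).symm
      rw [this]
      exact hUstab _ hab'
    set ψ : V ⧸ U → V ⧸ U := fun x => Quotient.liftOn' x
      (fun a => (Submodule.Quotient.mk (φ a) : V ⧸ U)) hwd with hψ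
    have hψmk : ∀ a : V, ψ (Submodule.Quotient.mk a) = Submodule.Quotient.mk (φ a) :=
      fun a => rfl
    have hψadd : ∀ x y : V ⧸ U, ψ (x + y) = ψ x + ψ y := by
      intro x y
      refine Submodule.Quotient.induction_on _ x fun a => ?_
      refine Submodule.Quotient.induction_on _ y fun b => ?_
      rw [← Submodule.Quotient.mk_add, hψmk, hψmk, hψmk, hadd, Submodule.Quotient.mk_add]
    have hψsmul : ∀ (c : k) (x : V ⧸ U), ψ (c • x) = c ^ q • ψ x := by
      intro c x
      refine Submodule.Quotient.induction_on _ x fun a => ?_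
      rw [← Submodule.Quotient.mk_smul, hψmk, hψmk, hsmul, Submodule.Quotient.mk_smul]
    have hψinj : Function.Injective ψ := by
      intro x y
      refine Submodule.Quotient.induction_on _ x fun a => ?_
      refine Submodule.Quotient.induction_on _ y fun b => ?_
      intro hab
      rw [hψmk, hψmk, Submodule.Quotient.eq] at hab
      rw [Submodule.Quotient.eq]
      have h2 : φ (a - b) ∈ U := by
        have : φ (a - b) = φ a - φ b := map_sub Φ' a b
        rw [this]; exact hab
      obtain ⟨w, hw, ew⟩ := hUsurj _ h2
      have hwab : w = a - b := hinj ew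
      rwa [hwab] at hw
    obtain ⟨w0, hw0⟩ := exists_ne (0 : V ⧸ U)
    obtain ⟨x, hx0, hxfix⟩ := exists_fixed_vector hnn hq ψ hψadd hψsmul hψinj hw0
    obtain ⟨y, rfl⟩ := Submodule.Quotient.mk_surjective U x
    have hyU : φ y - y ∈ U := by
      refine (Submodule.Quotient.eq U).mp ?_
      rw [← hψmk]
      exact hxfix
    have hyU' : y - φ y ∈ U := by
      have := neg_mem hyU
      rwa [neg_sub] at this
    obtain ⟨w, hw, hwe⟩ := hsurj1 _ hyU'
    have hfix : φ (y + w) = y + w := by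
      have h1 : φ (y + w) - (y + w) = (φ y - y) + (φ w - w) := by rw [hadd]; abel
      rw [hwe] at h1
      have h0 : φ (y + w) - (y + w) = 0 := by rw [h1]; abel
      rw [sub_eq_zero] at h0
      exact h0
    have hyU2 : y ∈ U := by
      have hmem : y + w ∈ U := Submodule.subset_span (show y + w ∈ S from hfix)
      have := sub_mem hmem hw
      simpa using this
    apply hx0
    rw [Submodule.Quotient.mk_eq_zero]
    exact hyU2
  -- extract a basis of fixed vectors
  obtain ⟨t, hts, htspan, htli⟩ := exists_linearIndependent k S
  have htop : ⊤ ≤ Submodule.span k (Set.range (Subtype.val : t → V)) := by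
    rw [Subtype.range_coe, htspan, ← hU, hUtop]
  set b0 : Module.Basis t k V := Module.Basis.mk htli htop with hb0
  have htfin : t.Finite := htli.setFinite
  have : Fintype t := htfin.fintype
  refine ⟨Fintype.card t, b0.reindex (Fintype.equivFin t), fun i => ?_⟩
  rw [Module.Basis.reindex_apply, hb0, Module.Basis.mk_apply]
  exact hts ((Fintype.equivFin t).symm i).2



end Lang


open IsLocalRing TensorProduct


set_option maxHeartbeats 2000000 in
theorem stmt_4 (p : ℕ) [Fact p.Prime]
    (O : Type*) [CommRing O] [IsDomain O] [IsDiscreteValuationRing O]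
    [IsAdicComplete (maximalIdeal O) O]
    [IsAlgClosed (ResidueField O)] [CharP (ResidueField O) p]
    (π : O) (hπ : Irreducible π)
    (σ : O ≃+* O) (hσπ : σ π = π)
    (n : ℕ) (hn : 1 ≤ n) (q : ℕ) (hq : q = p ^ n)
    (hσres : ∀ x : O, residue O (σ x) = residue O x ^ q)
    -- `O₀` is the fixed subring `O^⟨σ⟩`
    (O₀ : Type*) [CommRing O₀] [Algebra O₀ O]
    (hinj : Function.Injective (algebraMap O₀ O))
    (hrange : Set.range (algebraMap O₀ O) = {x : O | σ x = x})
    -- `Λ` is an `O`-order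
    (Λ : Type*) [Ring Λ] [Algebra O Λ] [Module.Free O Λ] [Module.Finite O Λ]
    [Algebra O₀ Λ] [IsScalarTower O₀ O Λ]
    -- an `O`-algebra isomorphism `Λ ≅ Λ^(σ)`, i.e. a `σ`-semilinear ring automorphism
    (Φ : Λ ≃+* Λ) (hΦ : ∀ (c : O) (a : Λ), Φ (c • a) = σ.symm c • Φ a) :
    ∃ Λ₀ : Subalgebra O₀ Λ, Module.Free O₀ Λ₀ ∧ Module.Finite O₀ Λ₀ ∧
      Nonempty ((O ⊗[O₀] Λ₀) ≃ₐ[O] Λ) := by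
  classical
  have hq2 : 2 ≤ q := by
    have h2 := (Fact.out (p := p.Prime)).two_le
    calc 2 ≤ p := h2
    _ ≤ p ^ n := Nat.le_self_pow (by omega) p
    _ = q := hq.symm
  -- Ψ = Φ⁻¹ is σ-semilinear (covariantly)
  set Ψ : Λ ≃+* Λ := Φ.symm with hΨdef
  have hΨ : ∀ (c : O) (a : Λ), Ψ (c • a) = σ c • Ψ a := by
    intro c a
    apply Φ.injective
    rw [hΦ (σ c) (Ψ a), RingEquiv.symm_apply_apply]
    show Φ (Φ.symm (c • a)) = c • Φ (Φ.symm a)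
    rw [Φ.apply_symm_apply, Φ.apply_symm_apply]
  have hΨΦ : ∀ a : Λ, Φ (Ψ a) = a := fun a => Φ.apply_symm_apply a
  -- the maximal ideal
  set I : Ideal O := maximalIdeal O with hIdef
  have hI : I = Ideal.span {π} := hπ.maximalIdeal_eq
  have hπI : π ∈ I := by rw [hI]; exact Ideal.subset_span rfl
  have hσsymmπ : σ.symm π = π := by
    conv_lhs => rw [← hσπ]
    exact σ.symm_apply_apply π
  have hσI : ∀ c ∈ I, σ c ∈ I := by
    intro c hc
    rw [hI, Ideal.mem_span_singleton] at hc ⊢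
    obtain ⟨d, rfl⟩ := hc
    exact ⟨σ d, by rw [map_mul, hσπ]⟩
  have hσsymmI : ∀ c ∈ I, σ.symm c ∈ I := by
    intro c hc
    rw [hI, Ideal.mem_span_singleton] at hc ⊢
    obtain ⟨d, rfl⟩ := hc
    exact ⟨σ.symm d, by rw [map_mul, hσsymmπ]⟩
  -- the quotient space V = Λ/πΛ as a vector space over the residue field
  set k : Type _ := ResidueField O with hkdef
  set N : Submodule O Λ := I • ⊤ with hNdef
  set V : Type _ := Λ ⧸ N with hVdef
  letI : Module k V := (inferInstance : Module (O ⧸ I) (Λ ⧸ (I • ⊤ : Submodule O Λ)))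
  have hmk_smul : ∀ (c : O) (a : Λ),
      (residue O c) • (Submodule.Quotient.mk a : V) = Submodule.Quotient.mk (c • a) :=
    fun c a => rfl
  letI : IsScalarTower O k V := by
    constructor
    intro c r v
    obtain ⟨s, rfl⟩ := Ideal.Quotient.mk_surjective r
    refine Submodule.Quotient.induction_on _ v fun a => ?_
    have h1 : c • (Ideal.Quotient.mk I s) = residue O (c * s) := rfl
    show (residue O (c * s)) • (Submodule.Quotient.mk a : V) = _
    rw [hmk_smul]
    show _ = c • ((residue O s) • (Submodule.Quotient.mk a : V))
    rw [hmk_smul]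
    show _ = c • (Submodule.Quotient.mk (s • a) : V)
    rw [mul_smul, Submodule.Quotient.mk_smul]
  letI : Module.Finite O V :=
    Module.Finite.of_surjective N.mkQ (Submodule.Quotient.mk_surjective N)
  letI : FiniteDimensional k V := Module.Finite.of_restrictScalars_finite O k V
  -- Ψ and Φ preserve N = πΛ
  have hNΨ : ∀ z ∈ N, Ψ z ∈ N := by
    intro z hz
    refine Submodule.smul_induction_on hz ?_ ?_
    · intro r hr m _
      rw [hΨ]
      exact Submodule.smul_mem_smul (hσI r hr) trivial
    · intro x y hx hy
      rw [map_add]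
      exact add_mem hx hy
  have hNΦ : ∀ z ∈ N, Φ z ∈ N := by
    intro z hz
    refine Submodule.smul_induction_on hz ?_ ?_
    · intro r hr m _
      rw [hΦ]
      exact Submodule.smul_mem_smul (hσsymmI r hr) trivial
    · intro x y hx hy
      rw [map_add]
      exact add_mem hx hy
  -- the induced map ψ on V
  have hwd : ∀ a b : Λ, (Submodule.quotientRel N) a b →
      (Submodule.Quotient.mk (Ψ a) : V) = Submodule.Quotient.mk (Ψ b) := by
    intro a b hab
    rw [Submodule.quotientRel_def] at hab
    rw [Submodule.Quotient.eq]
    rw [← map_sub]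
    exact hNΨ _ hab
  set ψ : V → V := fun x => Quotient.liftOn' x
    (fun a => (Submodule.Quotient.mk (Ψ a) : V)) hwd with hψdef
  have hψmk : ∀ a : Λ, ψ (Submodule.Quotient.mk a) = Submodule.Quotient.mk (Ψ a) := fun a => rfl
  have hψadd : ∀ x y : V, ψ (x + y) = ψ x + ψ y := by
    intro x y
    refine Submodule.Quotient.induction_on _ x fun a => ?_
    refine Submodule.Quotient.induction_on _ y fun b => ?_
    rw [← Submodule.Quotient.mk_add, hψmk, hψmk, hψmk, map_add, Submodule.Quotient.mk_add]
  have hψsmul : ∀ (r : k) (x : V), ψ (r • x) = r ^ q • ψ x := by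
    intro r x
    obtain ⟨c, rfl⟩ := Ideal.Quotient.mk_surjective r
    refine Submodule.Quotient.induction_on _ x fun a => ?_
    have h1 : (Ideal.Quotient.mk I c : k) = residue O c := rfl
    rw [h1, hmk_smul, hψmk, hψmk, hΨ, ← hmk_smul, hσres]
  have hψinj : Function.Injective ψ := by
    intro x y
    refine Submodule.Quotient.induction_on _ x fun a => ?_
    refine Submodule.Quotient.induction_on _ y fun b => ?_
    intro hab
    rw [hψmk, hψmk, Submodule.Quotient.eq, ← map_sub] at hab
    rw [Submodule.Quotient.eq]
    have h2 := hNΦ _ hab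
    rwa [hΨΦ] at h2
  -- fixed basis of V
  obtain ⟨Nb, bV, hbV⟩ := exists_fixed_basis (show 0 < n by omega) hq ψ hψadd hψsmul hψinj
  -- surjectivity of ψ - 1 on V
  have hVsurj : ∀ w : V, ∃ u : V, ψ u - u = w := by
    intro w
    have hw : ∑ i, (bV.repr w) i • bV i = w := bV.sum_repr w
    choose c hc using fun i => artin_schreier_surj hq2 ((bV.repr w) i)
    refine ⟨∑ i, c i • bV i, ?_⟩
    set Ψ' : V →+ V := AddMonoidHom.mk' ψ hψadd with hΨ'
    have h1 : ψ (∑ i, c i • bV i) = ∑ i, (c i ^ q) • bV i := by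
      show Ψ' _ = _
      rw [map_sum]
      refine Finset.sum_congr rfl fun i _ => ?_
      show ψ (c i • bV i) = _
      rw [hψsmul, hbV]
    rw [h1, ← Finset.sum_sub_distrib, ← hw]
    exact Finset.sum_congr rfl fun i _ => by rw [← sub_smul, hc]
  -- surjectivity of Ψ - 1 mod π on Λ
  have keyS : ∀ z : Λ, ∃ y : Λ, Ψ y - y + z ∈ N := by
    intro z
    obtain ⟨u, hu⟩ := hVsurj (-(Submodule.Quotient.mk z : V))
    obtain ⟨y, rfl⟩ := Submodule.Quotient.mk_surjective N u
    refine ⟨y, ?_⟩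
    rw [← Submodule.Quotient.mk_eq_zero]
    have : (Submodule.Quotient.mk (Ψ y - y + z) : V)
        = (ψ (Submodule.Quotient.mk y) - Submodule.Quotient.mk y) + Submodule.Quotient.mk z := by
      rw [hψmk, Submodule.Quotient.mk_add, Submodule.Quotient.mk_sub]
    rw [this, hu]
    abel
  -- ===== stage (c): π-adic approximation =====
  haveI : IsAdicComplete I O := hIdef ▸ (inferInstance : IsAdicComplete (maximalIdeal O) O)
  set b : Module.Basis (Module.Free.ChooseBasisIndex O Λ) O Λ := Module.Free.chooseBasis O Λ with hbdef
  set P : ℕ → Λ → Prop := fun m x => ∃ y : Λ, x = π ^ m • y with hPdef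
  have hPadd : ∀ {m : ℕ} {x y : Λ}, P m x → P m y → P m (x + y) := by
    rintro m x y ⟨u, rfl⟩ ⟨v, rfl⟩
    exact ⟨u + v, (smul_add _ _ _).symm⟩
  have hPneg : ∀ {m : ℕ} {x : Λ}, P m x → P m (-x) := by
    rintro m x ⟨u, rfl⟩
    exact ⟨-u, (smul_neg _ _).symm⟩
  have hPle : ∀ {m m' : ℕ} {x : Λ}, m ≤ m' → P m' x → P m x := by
    rintro m m' x hle ⟨u, rfl⟩
    obtain ⟨d, rfl⟩ := Nat.exists_eq_add_of_le hle
    exact ⟨π ^ d • u, by rw [← mul_smul, ← pow_add]⟩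
  have hPΨ : ∀ {m : ℕ} {x : Λ}, P m x → P m (Ψ x) := by
    rintro m x ⟨u, rfl⟩
    exact ⟨Ψ u, by rw [hΨ, map_pow, hσπ]⟩
  have hPN : ∀ x : Λ, x ∈ N ↔ P 1 x := by
    intro x
    constructor
    · intro hx
      refine Submodule.smul_induction_on hx ?_ ?_
      · intro r hr mm _
        rw [hI, Ideal.mem_span_singleton] at hr
        obtain ⟨d, rfl⟩ := hr
        exact ⟨d • mm, by rw [pow_one, ← mul_smul]⟩
      · intro x y hx hy
        exact hPadd hx hy
    · rintro ⟨y, rfl⟩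
      rw [pow_one]
      exact Submodule.smul_mem_smul hπI trivial
  have hPco : ∀ (m : ℕ) (x : Λ), P m x ↔ ∀ i, π ^ m ∣ b.repr x i := by
    intro m x
    constructor
    · rintro ⟨y, rfl⟩ i
      rw [map_smul, Finsupp.smul_apply, smul_eq_mul]
      exact ⟨b.repr y i, rfl⟩
    · intro h
      choose t ht using h
      refine ⟨∑ i, t i • b i, ?_⟩
      rw [Finset.smul_sum]
      conv_lhs => rw [← b.sum_repr x]
      refine Finset.sum_congr rfl fun i _ => ?_
      rw [smul_smul, ← ht]
  have hOmem : ∀ (m : ℕ) (c : O), c ∈ (I ^ m • ⊤ : Submodule O O) ↔ π ^ m ∣ c := by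
    intro m c
    have hIm : I ^ m = Ideal.span {π ^ m} := by rw [hI, Ideal.span_singleton_pow]
    constructor
    · intro hc
      refine Submodule.smul_induction_on hc ?_ ?_
      · intro r hr x _
        rw [hIm, Ideal.mem_span_singleton] at hr
        rw [smul_eq_mul]
        exact hr.mul_right x
      · intro x y hx hy
        exact dvd_add hx hy
    · rintro ⟨d, rfl⟩
      have hmem : π ^ m ∈ I ^ m := by rw [hIm]; exact Ideal.subset_span rfl
      exact Submodule.smul_mem_smul hmem trivial
  have hsmod : ∀ (m : ℕ) (c c' : O),
      (c ≡ c' [SMOD (I ^ m • ⊤ : Submodule O O)]) ↔ π ^ m ∣ (c - c') := by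
    intro m c c'
    rw [SModEq.sub_mem, hOmem]
  -- the lifting lemma: every approximate fixed point is close to an exact fixed point
  have lift : ∀ e : Λ, P 1 (Ψ e - e) → ∃ ehat : Λ, Ψ ehat = ehat ∧ P 1 (ehat - e) := by
    intro e he
    have step : ∀ (m : ℕ) (x : Λ), P (m + 1) (Ψ x - x) →
        ∃ x' : Λ, P (m + 1) (x' - x) ∧ P (m + 2) (Ψ x' - x') := by
      intro m x hx
      obtain ⟨z, hz⟩ := hx
      obtain ⟨y, hy⟩ := keyS z
      obtain ⟨w, hw⟩ := (hPN _).mp hy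
      rw [pow_one] at hw
      refine ⟨x + π ^ (m + 1) • y, ⟨y, by abel⟩, ⟨w, ?_⟩⟩
      have h1 : Ψ (x + π ^ (m + 1) • y) = Ψ x + π ^ (m + 1) • Ψ y := by
        rw [map_add, hΨ, map_pow, hσπ]
      calc Ψ (x + π ^ (m + 1) • y) - (x + π ^ (m + 1) • y)
          = (Ψ x - x) + π ^ (m + 1) • (Ψ y - y) := by rw [h1, smul_sub]; abel
      _ = π ^ (m + 1) • (z + (Ψ y - y)) := by rw [hz, smul_add]
      _ = π ^ (m + 1) • (Ψ y - y + z) := by rw [add_comm z]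
      _ = π ^ (m + 1) • (π • w) := by rw [hw]
      _ = π ^ (m + 2) • w := by rw [← mul_smul, ← pow_succ]
    let T : ℕ → Type _ := fun m => {x : Λ // P (m + 1) (Ψ x - x)}
    let E : ∀ m : ℕ, T m := fun m => Nat.rec (motive := T)
      ⟨e, by simpa using he⟩
      (fun m xm => ⟨Classical.choose (step m xm.1 xm.2),
        (Classical.choose_spec (step m xm.1 xm.2)).2⟩) m
    have hE0 : (E 0).1 = e := rfl
    have hEstep : ∀ m, P (m + 1) ((E (m + 1)).1 - (E m).1) := fun m =>
      (Classical.choose_spec (step m (E m).1 (E m).2)).1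
    have hEcauchy : ∀ m mm, m ≤ mm → P m ((E mm).1 - (E m).1) := by
      intro m mm h
      induction mm with
      | zero =>
        have h0 : m = 0 := by omega
        subst h0
        exact ⟨0, by simp⟩
      | succ mm ih =>
        rcases Nat.lt_or_ge m (mm + 1) with hlt | hge
        · have h1 := ih (by omega)
          have h2 : P m ((E (mm + 1)).1 - (E mm).1) := hPle (by omega) (hEstep mm)
          have h3 := hPadd h2 h1
          have heq : ((E (mm + 1)).1 - (E mm).1) + ((E mm).1 - (E m).1)
              = (E (mm + 1)).1 - (E m).1 := by abel
          rwa [heq] at h3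
        · have h0 : m = mm + 1 := by omega
          subst h0
          exact ⟨0, by simp⟩
    have hprec : ∀ i, ∃ L : O, ∀ mm,
        b.repr (E mm).1 i ≡ L [SMOD (I ^ mm • ⊤ : Submodule O O)] := by
      intro i
      refine IsPrecomplete.prec inferInstance ?_
      intro m mm hmn
      rw [hsmod]
      have hv := (hPco m _).mp (hEcauchy m mm hmn) i
      rw [map_sub, Finsupp.sub_apply] at hv
      have := dvd_neg.mpr hv
      rwa [neg_sub] at this
    choose L hL using hprec
    set ehat : Λ := ∑ i, L i • b i with hehatdef
    have hrepr_ehat : ∀ i, b.repr ehat i = L i := by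
      intro i
      rw [hehatdef, b.repr_sum_self]
    have hclose : ∀ m, P m ((E m).1 - ehat) := by
      intro m
      rw [hPco]
      intro i
      rw [map_sub, Finsupp.sub_apply, hrepr_ehat]
      exact (hsmod m _ _).mp (hL i m)
    have hfix : Ψ ehat = ehat := by
      rw [← sub_eq_zero]
      have hall : ∀ m, P m (Ψ ehat - ehat) := by
        intro m
        have h1 : P m (Ψ (ehat - (E m).1)) := by
          refine hPΨ ?_
          have := hPneg (hclose m)
          rwa [neg_sub] at this
        have h2 : P m (Ψ (E m).1 - (E m).1) := hPle (by omega) (E m).2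
        have h3 : P m ((E m).1 - ehat) := hclose m
        have hsum := hPadd (hPadd h1 h2) h3
        have heq : Ψ (ehat - (E m).1) + (Ψ (E m).1 - (E m).1) + ((E m).1 - ehat)
            = Ψ ehat - ehat := by rw [map_sub]; abel
        rwa [heq] at hsum
      have hco : ∀ i, b.repr (Ψ ehat - ehat) i = 0 := by
        intro i
        refine IsHausdorff.haus (inferInstance : IsHausdorff I O) _ fun m => ?_
        rw [SModEq.zero, hOmem]
        exact (hPco m _).mp (hall m) i
      calc Ψ ehat - ehat = ∑ i, b.repr (Ψ ehat - ehat) i • b i := (b.sum_repr _).symm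
      _ = 0 := Finset.sum_eq_zero fun i _ => by rw [hco i, zero_smul]
    refine ⟨ehat, hfix, ?_⟩
    have h1 := hPneg (hclose 1)
    have h2 : P 1 ((E 1).1 - e) := by
      have h := hEstep 0
      rw [hE0] at h
      exact h
    have h3 := hPadd h1 h2
    have heq : -((E 1).1 - ehat) + ((E 1).1 - e) = ehat - e := by abel
    rwa [heq] at h3
  -- ===== stage (d1): lift the fixed basis of V to fixed elements of Λ =====
  have hliftb : ∀ i : Fin Nb, ∃ a : Λ, Ψ a = a ∧ (Submodule.Quotient.mk a : V) = bV i := by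
    intro i
    obtain ⟨e, he⟩ := Submodule.Quotient.mk_surjective N (bV i)
    have h1 : P 1 (Ψ e - e) := by
      rw [← hPN]
      refine (Submodule.Quotient.mk_eq_zero N).mp ?_
      rw [Submodule.Quotient.mk_sub, ← hψmk, he, hbV i, sub_self]
    obtain ⟨a, ha1, ha2⟩ := lift e h1
    refine ⟨a, ha1, ?_⟩
    have h4 : (Submodule.Quotient.mk a : V) - Submodule.Quotient.mk e = 0 := by
      rw [← Submodule.Quotient.mk_sub]
      exact (Submodule.Quotient.mk_eq_zero N).mpr ((hPN _).mpr ha2)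
    rw [sub_eq_zero] at h4
    rw [h4, he]
  choose g hgfix hgmk using hliftb
  -- sums of P m elements
  have hPsum : ∀ (m : ℕ) (s : Finset (Fin Nb)) (f : Fin Nb → Λ),
      (∀ i ∈ s, P m (f i)) → P m (∑ i ∈ s, f i) := by
    intro m s f hf
    refine Finset.sum_induction f (P m) (fun a b ha hb => hPadd ha hb) ⟨0, (smul_zero _).symm⟩ hf
  -- ===== stage (d2): the lifted elements span Λ =====
  have hstep0 : ∀ x : Λ, ∃ (c : Fin Nb → O) (x' : Λ), x = (∑ i, c i • g i) + π • x' := by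
    intro x
    have hx : ∑ i, (bV.repr (Submodule.Quotient.mk x)) i • bV i
        = (Submodule.Quotient.mk x : V) := bV.sum_repr _
    choose c hc using fun i =>
      Ideal.Quotient.mk_surjective ((bV.repr (Submodule.Quotient.mk x : V)) i)
    have h2 : (Submodule.Quotient.mk (∑ i, c i • g i) : V)
        = ∑ i, (bV.repr (Submodule.Quotient.mk x)) i • bV i := by
      rw [← Submodule.mkQ_apply, map_sum]
      refine Finset.sum_congr rfl fun i _ => ?_
      rw [Submodule.mkQ_apply, ← hgmk i, ← hc i]
      rfl
    have h1 : (Submodule.Quotient.mk (x - ∑ i, c i • g i) : V) = 0 := by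
      rw [Submodule.Quotient.mk_sub, h2, hx, sub_self]
    have h3 := (hPN _).mp ((Submodule.Quotient.mk_eq_zero N).mp h1)
    obtain ⟨x', hx'⟩ := h3
    rw [pow_one] at hx'
    exact ⟨c, x', by rw [← hx']; abel⟩
  have hspan : ∀ x : Λ, x ∈ Submodule.span O (Set.range g) := by
    intro x
    let A : ℕ → (Fin Nb → O) × Λ := fun m => Nat.rec ((fun _ => (0 : O)), x)
      (fun m am =>
        ((fun i => am.1 i + π ^ m * Classical.choose (hstep0 am.2) i),
          Classical.choose (Classical.choose_spec (hstep0 am.2)))) m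
    have hAstep1 : ∀ m i, (A (m + 1)).1 i
        = (A m).1 i + π ^ m * Classical.choose (hstep0 (A m).2) i := fun m i => rfl
    have hAstep2 : ∀ m, (A m).2 = (∑ i, Classical.choose (hstep0 (A m).2) i • g i)
        + π • (A (m + 1)).2 := fun m =>
      Classical.choose_spec (Classical.choose_spec (hstep0 (A m).2))
    have hInv : ∀ m, x = (∑ i, (A m).1 i • g i) + π ^ m • (A m).2 := by
      intro m
      induction m with
      | zero => simp [A]
      | succ m ih =>
        have e1 : ∑ i, (A (m + 1)).1 i • g i
            = (∑ i, (A m).1 i • g i)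
              + π ^ m • ∑ i, Classical.choose (hstep0 (A m).2) i • g i := by
          rw [Finset.smul_sum, ← Finset.sum_add_distrib]
          refine Finset.sum_congr rfl fun i _ => ?_
          rw [hAstep1 m i, add_smul, smul_smul]
        rw [e1]
        calc x = (∑ i, (A m).1 i • g i) + π ^ m • (A m).2 := ih
        _ = (∑ i, (A m).1 i • g i) + π ^ m •
            ((∑ i, Classical.choose (hstep0 (A m).2) i • g i) + π • (A (m + 1)).2) :=
          congrArg (fun z => (∑ i, (A m).1 i • g i) + π ^ m • z) (hAstep2 m)
        _ = ((∑ i, (A m).1 i • g i)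
              + π ^ m • ∑ i, Classical.choose (hstep0 (A m).2) i • g i)
            + π ^ (m + 1) • (A (m + 1)).2 := by
          rw [smul_add, ← mul_smul, ← pow_succ]
          abel
    have hCau : ∀ i m mm, m ≤ mm → π ^ m ∣ ((A mm).1 i - (A m).1 i) := by
      intro i m mm h
      induction mm with
      | zero =>
        have h0 : m = 0 := by omega
        subst h0; simp
      | succ mm ih =>
        rcases Nat.lt_or_ge m (mm + 1) with hlt | hge
        · have h1 := ih (by omega)
          have h2 : π ^ m ∣ ((A (mm + 1)).1 i - (A mm).1 i) := by
            rw [hAstep1]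
            have : (A mm).1 i + π ^ mm * Classical.choose (hstep0 (A mm).2) i - (A mm).1 i
                = π ^ mm * Classical.choose (hstep0 (A mm).2) i := by ring
            rw [this]
            exact Dvd.dvd.mul_right (pow_dvd_pow π (by omega)) _
          have h3 := dvd_add h2 h1
          rwa [sub_add_sub_cancel] at h3
        · have h0 : m = mm + 1 := by omega
          subst h0; simp
    have hLim : ∀ i, ∃ L : O, ∀ mm,
        (A mm).1 i ≡ L [SMOD (I ^ mm • ⊤ : Submodule O O)] := by
      intro i
      refine IsPrecomplete.prec inferInstance ?_
      intro m mm h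
      rw [hsmod]
      have := dvd_neg.mpr (hCau i m mm h)
      rwa [neg_sub] at this
    choose L hLspec using hLim
    have hallm : ∀ m, P m (x - ∑ i, L i • g i) := by
      intro m
      have hdecomp : x - ∑ i, L i • g i
          = (∑ i, ((A m).1 i - L i) • g i) + π ^ m • (A m).2 := by
        conv_lhs => rw [hInv m]
        rw [Finset.sum_congr rfl (fun (i : Fin Nb) _ => sub_smul ((A m).1 i) (L i) (g i)),
          Finset.sum_sub_distrib]
        abel
      rw [hdecomp]
      refine hPadd (hPsum m _ _ fun i _ => ?_) ⟨(A m).2, rfl⟩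
      have hdvd : π ^ m ∣ ((A m).1 i - L i) := by
        have := (hsmod m _ _).mp (hLspec i m)
        exact this
      obtain ⟨t, ht⟩ := hdvd
      exact ⟨t • g i, by rw [ht, mul_smul]⟩
    have hco : ∀ i0, b.repr (x - ∑ i, L i • g i) i0 = 0 := by
      intro i0
      refine IsHausdorff.haus (inferInstance : IsHausdorff I O) _ fun m => ?_
      rw [SModEq.zero, hOmem]
      exact (hPco m _).mp (hallm m) i0
    have hzero : x - ∑ i, L i • g i = 0 := by
      calc x - ∑ i, L i • g i
          = ∑ i0, b.repr (x - ∑ i, L i • g i) i0 • b i0 := (b.sum_repr _).symm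
      _ = 0 := Finset.sum_eq_zero fun i0 _ => by rw [hco i0, zero_smul]
    rw [sub_eq_zero] at hzero
    rw [hzero]
    exact Submodule.sum_mem _ fun i _ =>
      Submodule.smul_mem _ _ (Submodule.subset_span ⟨i, rfl⟩)
  -- ===== stage (d3): the lifted elements are linearly independent over O =====
  have hindep : ∀ (c : Fin Nb → O), ∑ i, c i • g i = 0 → ∀ i, c i = 0 := by
    intro c hc
    have hdiv : ∀ m, ∃ c' : Fin Nb → O, (∀ i, c i = π ^ m * c' i) ∧ ∑ i, c' i • g i = 0 := by
      intro m
      induction m with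
      | zero => exact ⟨c, fun i => by rw [pow_zero, one_mul], hc⟩
      | succ m ih =>
        obtain ⟨c', hc', hsum⟩ := ih
        have hmkz : ∑ i, (residue O (c' i) : k) • bV i = (0 : V) := by
          have h5 := congrArg (N.mkQ) hsum
          rw [map_sum, map_zero] at h5
          rw [← h5]
          refine Finset.sum_congr rfl fun i _ => ?_
          rw [Submodule.mkQ_apply, ← hgmk i]
          rfl
        have hzero : ∀ i, residue O (c' i) = 0 :=
          fun i => Fintype.linearIndependent_iff.mp bV.linearIndependent _ hmkz i
        have hdvd : ∀ i, π ∣ c' i := by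
          intro i
          have h6 : c' i ∈ I := Ideal.Quotient.eq_zero_iff_mem.mp (hzero i)
          rwa [hI, Ideal.mem_span_singleton] at h6
        choose c'' hc'' using hdvd
        refine ⟨c'', fun i => by rw [hc' i, hc'' i, pow_succ]; ring, ?_⟩
        have h1 : π • (∑ i, c'' i • g i) = 0 := by
          rw [Finset.smul_sum, ← hsum]
          refine Finset.sum_congr rfl fun i _ => ?_
          rw [smul_smul, ← hc'' i]
        have h2 : ∀ i0, π * b.repr (∑ i, c'' i • g i) i0 = 0 := by
          intro i0
          have h7 : π • b.repr (∑ i, c'' i • g i) = 0 := by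
            rw [← map_smul, h1, map_zero]
          calc π * b.repr (∑ i, c'' i • g i) i0
              = (π • b.repr (∑ i, c'' i • g i)) i0 := by
                rw [Finsupp.smul_apply, smul_eq_mul]
          _ = 0 := by rw [h7]; rfl
        have h3 : ∀ i0, b.repr (∑ i, c'' i • g i) i0 = 0 :=
          fun i0 => (mul_eq_zero.mp (h2 i0)).resolve_left hπ.ne_zero
        calc ∑ i, c'' i • g i
            = ∑ i0, b.repr (∑ i, c'' i • g i) i0 • b i0 := (b.sum_repr _).symm
        _ = 0 := Finset.sum_eq_zero fun i0 _ => by rw [h3 i0, zero_smul]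
    intro i
    refine IsHausdorff.haus (inferInstance : IsHausdorff I O) (c i) fun m => ?_
    rw [SModEq.zero, hOmem]
    obtain ⟨c', hc', _⟩ := hdiv m
    exact ⟨c' i, hc' i⟩
  have hli : LinearIndependent O g := Fintype.linearIndependent_iff.mpr hindep
  have hsp : ⊤ ≤ Submodule.span O (Set.range g) := fun x _ => hspan x
  set bL : Module.Basis (Fin Nb) O Λ := Module.Basis.mk hli hsp with hbLdef
  have hbL : ∀ i, bL i = g i := Module.Basis.mk_apply hli hsp
  -- ===== stage (e): the fixed subalgebra and the tensor equivalence =====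
  set Λ₀ : Subalgebra O₀ Λ := {
            carrier := {a : Λ | Ψ a = a}
            mul_mem' := fun {x y} hx hy => by
              simp only [Set.mem_setOf_eq] at *
              rw [map_mul, hx, hy]
            one_mem' := by simp only [Set.mem_setOf_eq, map_one]
            add_mem' := fun {x y} hx hy => by
              simp only [Set.mem_setOf_eq] at *
              rw [map_add, hx, hy]
            zero_mem' := by simp only [Set.mem_setOf_eq, map_zero]
            algebraMap_mem' := fun r => by
              show Ψ (algebraMap O₀ Λ r) = algebraMap O₀ Λ r
              have h1 : algebraMap O₀ Λ r = (algebraMap O₀ O r) • (1 : Λ) := by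
                rw [IsScalarTower.algebraMap_apply O₀ O Λ, Algebra.algebraMap_eq_smul_one]
              have h2 : σ (algebraMap O₀ O r) = algebraMap O₀ O r :=
                (hrange ▸ Set.mem_range_self r : algebraMap O₀ O r ∈ {x : O | σ x = x})
              rw [h1, hΨ, map_one, h2] } with hΛ₀def
  have hmemΛ₀ : ∀ a : Λ, a ∈ Λ₀ ↔ Ψ a = a := fun a => Iff.rfl
  set v : Fin Nb → Λ₀ := fun i => ⟨g i, (hmemΛ₀ (g i)).mpr (hgfix i)⟩ with hvdef
  have hval : ∀ i, (v i : Λ) = g i := fun i => rfl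
  -- linear independence of v over O₀
  have hvli : LinearIndependent O₀ v := by
    rw [Fintype.linearIndependent_iff]
    intro cc hcc i
    have h1 : ∑ j, algebraMap O₀ O (cc j) • g j = 0 := by
      have h9 := congrArg (Subalgebra.val Λ₀) hcc
      rw [map_sum, map_zero] at h9
      rw [← h9]
      refine Finset.sum_congr rfl fun j _ => ?_
      show algebraMap O₀ O (cc j) • g j = (Λ₀.val) (cc j • v j)
      rw [map_smul, algebraMap_smul]
      rfl
    have h2 := hindep _ h1 i
    exact hinj (by rw [h2, map_zero])
  -- v spans Λ₀
  have hvsp : ⊤ ≤ Submodule.span O₀ (Set.range v) := by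
    rintro ⟨a, ha⟩ -
    have hafix : Ψ a = a := (hmemΛ₀ a).mp ha
    have hc : ∑ i, (bL.repr a) i • g i = a := by
      conv_rhs => rw [← bL.sum_repr a]
      exact Finset.sum_congr rfl fun i _ => by rw [hbL]
    have h1 : Ψ a = ∑ i, σ ((bL.repr a) i) • g i := by
      conv_lhs => rw [← hc]
      rw [map_sum]
      refine Finset.sum_congr rfl fun i _ => ?_
      rw [hΨ, hgfix]
    have h2 : ∑ i, (σ ((bL.repr a) i) - (bL.repr a) i) • g i = 0 := by
      rw [Finset.sum_congr rfl (fun (i : Fin Nb) _ =>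
        sub_smul (σ ((bL.repr a) i)) ((bL.repr a) i) (g i)), Finset.sum_sub_distrib]
      rw [← h1, hc, hafix, sub_self]
    have hfixcoef : ∀ i, σ ((bL.repr a) i) = (bL.repr a) i :=
      fun i => sub_eq_zero.mp (hindep _ h2 i)
    have hpre : ∀ i, ∃ r : O₀, algebraMap O₀ O r = (bL.repr a) i := by
      intro i
      have : (bL.repr a) i ∈ Set.range (algebraMap O₀ O) := by
        rw [hrange]; exact hfixcoef i
      exact this
    choose r hr using hpre
    have hsum : (∑ i, r i • v i : Λ₀) = ⟨a, ha⟩ := by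
      apply Subtype.ext
      show Λ₀.val (∑ i, r i • v i) = a
      rw [map_sum]
      have hterm : ∀ i, Λ₀.val (r i • v i) = (bL.repr a) i • g i := by
        intro i
        rw [map_smul]
        show r i • (g i) = _
        rw [← algebraMap_smul O (r i) (g i), hr]
      rw [Finset.sum_congr rfl (fun i _ => hterm i), hc]
    rw [← hsum]
    exact Submodule.sum_mem _ fun i _ =>
      Submodule.smul_mem _ _ (Submodule.subset_span ⟨i, rfl⟩)
  set b₀ : Module.Basis (Fin Nb) O₀ Λ₀ := Module.Basis.mk hvli hvsp with hb₀def
  have hb₀ : ∀ i, b₀ i = v i := Module.Basis.mk_apply hvli hvsp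
  -- the algebra map from the tensor product
  set f : (O ⊗[O₀] Λ₀) →ₐ[O] Λ := Algebra.TensorProduct.lift (Algebra.ofId O Λ) Λ₀.val
    (fun x y => show Commute (Algebra.ofId O Λ x) (Λ₀.val y) from Algebra.commute_algebraMap_left x (Λ₀.val y)) with hfdef
  set bT : Module.Basis (Fin Nb) O (O ⊗[O₀] Λ₀) := Module.Basis.baseChange O b₀ with hbTdef
  have hfb : ∀ i, f (bT i) = g i := by
    intro i
    rw [hbTdef, Module.Basis.baseChange_apply, hfdef, Algebra.TensorProduct.lift_tmul]
    rw [map_one, one_mul]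
    show Λ₀.val (b₀ i) = g i
    rw [hb₀]
    rfl
  set Eqv : (O ⊗[O₀] Λ₀) ≃ₗ[O] Λ := bT.equiv bL (Equiv.refl _) with hEqvdef
  have hfE : ∀ x, f x = Eqv x := by
    have hext : f.toLinearMap = (Eqv : (O ⊗[O₀] Λ₀) →ₗ[O] Λ) := by
      apply bT.ext
      intro i
      show f (bT i) = Eqv (bT i)
      rw [hfb, hEqvdef, bT.equiv_apply, Equiv.refl_apply, hbL]
    intro x
    exact congrArg (fun h : (O ⊗[O₀] Λ₀) →ₗ[O] Λ => h x) hext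
  have hbij : Function.Bijective f := by
    constructor
    · intro a b hab
      apply Eqv.injective
      rw [← hfE, ← hfE]
      exact hab
    · intro y
      exact ⟨Eqv.symm y, by rw [hfE, LinearEquiv.apply_symm_apply]⟩
  exact ⟨Λ₀, Module.Free.of_basis b₀, Module.Finite.of_basis b₀,
    ⟨AlgEquiv.ofBijective f hbij⟩⟩
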